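/- Let p and q be probability distributions on a finite set T, and let L_∞(p,q) := max_{x ∈ T} |p(x) − q(x)|. Then there exists a strict total order ⊏ on T such that P(R_{p,q} = 0) ≥ 1/2 + (1/2)·L_∞(p,q)². -/

import Mathlib

open MeasureTheory ProbabilityTheory
open scoped ENNReal

noncomputable section
attribute [local instance] Classical.propDecidable

/-- A fair coin: the Bernoulli(1/2) distribution on `Bool`. -/
def fairCoin : Measure Bool := (PMF.bernoulli 2⁻¹ (by norm_num)).toMeasure

instance : IsProbabilityMeasure fairCoin := PMF.toMeasure.isProbabilityMeasure _

/-- `P(R_{p,q} = 0)` for the `m = 1` stochastic rank statistic: sample `X ~ p`, `Y ~ q`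
and a fair coin `c`, all mutually independent (so the joint law is the product measure);
`R_{p,q} = 0` iff `Y ⊏ X`, or `X = Y` and the tie-breaking coin comes up heads. -/
def probR0 {T : Type} [MeasurableSpace T] (rlt : T → T → Prop) (p q : PMF T) : ℝ≥0∞ :=
  ((p.toMeasure.prod q.toMeasure).prod fairCoin)
    {z : (T × T) × Bool | rlt z.1.2 z.1.1 ∨ (z.1.1 = z.1.2 ∧ z.2 = true)}

/-- `P(R_{p,q} = 0 | X ∈ B, Y ∈ C)`: the conditional probability of the event
`R_{p,q} = 0` given `X ∈ B` and `Y ∈ C`, in the setting of `probR0`. -/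
def probR0cond {T : Type} [MeasurableSpace T] (rlt : T → T → Prop) (p q : PMF T)
    (B C : Set T) : ℝ≥0∞ :=
  (((p.toMeasure.prod q.toMeasure).prod fairCoin)[|{z : (T × T) × Bool |
      z.1.1 ∈ B ∧ z.1.2 ∈ C}])
    {z : (T × T) × Bool | rlt z.1.2 z.1.1 ∨ (z.1.1 = z.1.2 ∧ z.2 = true)}

lemma measure_fintype_eq_sum {α : Type*} [Fintype α] [MeasurableSpace α]
    [MeasurableSingletonClass α] (μ : Measure α) (s : Set α) :
    μ s = ∑ a : α, if a ∈ s then μ {a} else 0 := by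
  classical
  rw [← MeasureTheory.Measure.tsum_indicator_apply_singleton μ s (Set.toFinite s).measurableSet,
    tsum_fintype]
  exact Finset.sum_congr rfl fun a _ => by simp [Set.indicator_apply]

lemma fairCoin_true : fairCoin {true} = 2⁻¹ := by
  rw [fairCoin, PMF.toMeasure_apply_singleton _ _ (measurableSet_singleton _),
    PMF.bernoulli_apply]
  exact ENNReal.coe_inv_two

lemma pmf_prod_singleton {T : Type} [MeasurableSpace T] [MeasurableSingletonClass T]
    (p q : PMF T) (w : T × T) :
    (p.toMeasure.prod q.toMeasure) {w} = p w.1 * q w.2 := by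
  rw [← Set.singleton_prod_singleton, Measure.prod_prod,
    PMF.toMeasure_apply_singleton _ _ (measurableSet_singleton _),
    PMF.toMeasure_apply_singleton _ _ (measurableSet_singleton _)]

lemma probR0_eq {T : Type} [Fintype T] [MeasurableSpace T] [MeasurableSingletonClass T]
    (rlt : T → T → Prop) (hirr : ∀ x, ¬ rlt x x) (p q : PMF T) :
    probR0 rlt p q
      = (∑ w : T × T, if rlt w.2 w.1 then p w.1 * q w.2 else 0)
        + 2⁻¹ * ∑ w : T × T, if w.1 = w.2 then p w.1 * q w.2 else 0 := by
  classical
  have hS2 : MeasurableSet {w : T × T | w.1 = w.2} := (Set.toFinite _).measurableSet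
  have hset : {z : (T × T) × Bool | rlt z.1.2 z.1.1 ∨ (z.1.1 = z.1.2 ∧ z.2 = true)}
      = ({w : T × T | rlt w.2 w.1} ×ˢ (Set.univ : Set Bool))
        ∪ ({w : T × T | w.1 = w.2} ×ˢ ({true} : Set Bool)) := by
    ext ⟨⟨x, y⟩, b⟩
    simp only [Set.mem_setOf_eq, Set.mem_union, Set.mem_prod, Set.mem_univ, and_true,
      Set.mem_singleton_iff]
  have hdisj : Disjoint ({w : T × T | rlt w.2 w.1} ×ˢ (Set.univ : Set Bool))
      (({w : T × T | w.1 = w.2} : Set (T × T)) ×ˢ ({true} : Set Bool)) := by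
    rw [Set.disjoint_left]
    rintro ⟨⟨x, y⟩, b⟩ h1 h2
    simp only [Set.mem_prod, Set.mem_setOf_eq] at h1 h2
    exact hirr x (h2.1 ▸ h1.1)
  rw [probR0, hset, measure_union hdisj (hS2.prod (measurableSet_singleton true)),
    Measure.prod_prod, Measure.prod_prod, measure_univ, mul_one, fairCoin_true,
    measure_fintype_eq_sum, measure_fintype_eq_sum]
  rw [mul_comm]
  congr 1
  · exact Finset.sum_congr rfl fun w _ => by simp [pmf_prod_singleton, Set.mem_setOf_eq]
  · congr 1
    exact Finset.sum_congr rfl fun w _ => by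
      by_cases h : w.1 = w.2 <;> simp [h, pmf_prod_singleton]

lemma probR0_toReal {T : Type} [Fintype T] [MeasurableSpace T] [MeasurableSingletonClass T]
    (rlt : T → T → Prop) (hirr : ∀ x, ¬ rlt x x) (p q : PMF T) :
    (probR0 rlt p q).toReal
      = (∑ x : T, ∑ y : T, if rlt y x then (p x).toReal * (q y).toReal else 0)
        + 2⁻¹ * ∑ x : T, (p x).toReal * (q x).toReal := by
  classical
  have hterm : ∀ (c : Prop) [Decidable c] (x y : T),
      (if c then p x * q y else 0) ≠ ⊤ := by
    intro c _ x y
    split_ifs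
    · exact (ENNReal.mul_lt_top (p.apply_lt_top _) (q.apply_lt_top _)).ne
    · exact ENNReal.zero_ne_top
  have hfin1 : (∑ w : T × T, if rlt w.2 w.1 then p w.1 * q w.2 else 0) ≠ ⊤ :=
    (ENNReal.sum_lt_top.mpr fun w _ => (hterm _ w.1 w.2).lt_top).ne
  have hfin2' : (∑ w : T × T, if w.1 = w.2 then p w.1 * q w.2 else 0) ≠ ⊤ :=
    (ENNReal.sum_lt_top.mpr fun w _ => (hterm _ w.1 w.2).lt_top).ne
  have hfin2 : 2⁻¹ * (∑ w : T × T, if w.1 = w.2 then p w.1 * q w.2 else 0) ≠ ⊤ :=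
    ENNReal.mul_ne_top (by simp) hfin2'
  rw [probR0_eq rlt hirr p q, ENNReal.toReal_add hfin1 hfin2, ENNReal.toReal_mul]
  congr 1
  · rw [ENNReal.toReal_sum (fun w _ => hterm _ w.1 w.2), Fintype.sum_prod_type]
    exact Finset.sum_congr rfl fun x _ => Finset.sum_congr rfl fun y _ => by
      split_ifs <;> simp [ENNReal.toReal_mul]
  · congr 1
    · simp
    · rw [ENNReal.toReal_sum (fun w _ => hterm _ w.1 w.2), Fintype.sum_prod_type]
      have : ∀ x : T, (∑ y : T, ((if x = y then p x * q y else 0) : ℝ≥0∞).toReal)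
          = (p x).toReal * (q x).toReal := by
        intro x
        rw [Finset.sum_eq_single x]
        · simp [ENNReal.toReal_mul]
        · intro y _ hy
          simp [Ne.symm hy]
        · simp
      exact Finset.sum_congr rfl fun x _ => this x

/-- **Theorem (lower bound in terms of `L∞(p,q)`).** Let `p, q` be probability
distributions on a finite set `T` and `L∞(p,q) := max_{x ∈ T} |p x − q x|`.  Then there is
a strict total order `⊏` on `T` such that
`P(R_{p,q} = 0) ≥ 1/2 + (1/2) L∞(p,q)²`. -/
theorem exists_order_probR0_ge_half_add_Linf_sq
    {T : Type} [Fintype T] [Nonempty T] [MeasurableSpace T] [MeasurableSingletonClass T]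
    (p q : PMF T) :
    ∃ rlt : T → T → Prop, IsStrictTotalOrder T rlt ∧
      1 / 2 + 1 / 2 *
          (Finset.univ.sup' Finset.univ_nonempty
            (fun x : T => |(p x).toReal - (q x).toReal|)) ^ 2
        ≤ (probR0 rlt p q).toReal := by
  classical
  set pr : T → ℝ := fun x => (p x).toReal with hprdef
  set qr : T → ℝ := fun x => (q x).toReal with hqrdef
  have hpr0 : ∀ x, 0 ≤ pr x := fun x => ENNReal.toReal_nonneg
  have hqr0 : ∀ x, 0 ≤ qr x := fun x => ENNReal.toReal_nonneg
  have hsum : ∀ (r : PMF T), ∑ x : T, (r x).toReal = 1 := by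
    intro r
    have h1 : ∑ x : T, r x = 1 := by rw [← tsum_fintype (L := SummationFilter.unconditional _)]; exact r.tsum_coe
    have := ENNReal.toReal_sum (s := Finset.univ) (f := fun x : T => r x)
      (fun a _ => r.apply_ne_top a)
    rw [h1] at this
    simpa using this.symm
  have hprs : ∑ x : T, pr x = 1 := hsum p
  have hqrs : ∑ x : T, qr x = 1 := hsum q
  have hpr1 : ∀ x, pr x ≤ 1 := by
    intro x
    calc pr x = (p x).toReal := rfl
    _ ≤ (1 : ℝ≥0∞).toReal := ENNReal.toReal_mono ENNReal.one_ne_top (p.coe_le_one x)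
    _ = 1 := by simp
  have hqr1 : ∀ x, qr x ≤ 1 := by
    intro x
    calc qr x = (q x).toReal := rfl
    _ ≤ (1 : ℝ≥0∞).toReal := ENNReal.toReal_mono ENNReal.one_ne_top (q.coe_le_one x)
    _ = 1 := by simp
  -- the key function and order
  set k : T → ℝ := fun x => qr x / (pr x + qr x) with hkdef
  set e : T ≃ Fin (Fintype.card T) := Fintype.equivFin T with hedef
  set g : T → Lex (ℝ × Fin (Fintype.card T)) := fun x => toLex (-(k x), e x) with hgdef
  have hginj : Function.Injective g := by
    intro u v huv
    have h2 : (ofLex (g u)).2 = (ofLex (g v)).2 := by rw [huv]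
    exact e.injective h2
  set rlt : T → T → Prop := fun u v => g u < g v with hrltdef
  have hirr : ∀ x, ¬ rlt x x := fun x => lt_irrefl (g x)
  have hsto : IsStrictTotalOrder T rlt :=
    { irrefl := fun a => lt_irrefl (g a)
      trans := fun a b c hab hbc => lt_trans hab hbc
      trichotomous := fun a b h1 h2 => by
        rcases lt_trichotomy (g a) (g b) with h | h | h
        exacts [absurd h h1, hginj h, absurd h h2] }
  -- antisymmetric kernel
  set a : T → T → ℝ := fun x y => pr x * qr y - pr y * qr x with hadef
  have hkey : ∀ x y, k x ≤ k y → 0 ≤ a x y := by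
    intro x y h
    by_cases hx : pr x + qr x = 0
    · have h1 : pr x = 0 := by nlinarith [hpr0 x, hqr0 x]
      have h2 : qr x = 0 := by nlinarith [hpr0 x, hqr0 x]
      simp [hadef, h1, h2]
    by_cases hy : pr y + qr y = 0
    · have h1 : pr y = 0 := by nlinarith [hpr0 y, hqr0 y]
      have h2 : qr y = 0 := by nlinarith [hpr0 y, hqr0 y]
      simp [hadef, h1, h2]
    · have hx' : 0 < pr x + qr x :=
        lt_of_le_of_ne (by positivity) (Ne.symm hx)
      have hy' : 0 < pr y + qr y :=
        lt_of_le_of_ne (by positivity) (Ne.symm hy)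
      rw [hkdef] at h
      simp only at h
      rw [div_le_div_iff₀ hx' hy'] at h
      simp only [hadef]
      nlinarith
  have hkey' : ∀ x y, rlt y x → 0 ≤ a x y := by
    intro x y h
    have h' : toLex (-(k y), e y) < toLex (-(k x), e x) := h
    rw [Prod.Lex.lt_iff] at h'
    rcases h' with h' | ⟨h', _⟩
    · exact hkey x y (le_of_lt (by simpa using (neg_lt_neg_iff.mp h')))
    · exact hkey x y (le_of_eq (neg_injective h').symm)
  -- sums
  set W : ℝ := ∑ x : T, ∑ y : T, if rlt y x then pr x * qr y else 0 with hWdef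
  set W' : ℝ := ∑ x : T, ∑ y : T, if rlt x y then pr x * qr y else 0 with hW'def
  set D : ℝ := ∑ x : T, pr x * qr x with hDdef
  have hasymm : ∀ x y, rlt y x → ¬ rlt x y := fun x y h h' => hirr x (lt_trans h' h)
  have hne : ∀ x y, rlt y x → x ≠ y := by
    rintro x y h rfl; exact hirr x h
  have htot : W + W' + D = 1 := by
    have hD' : D = ∑ x : T, ∑ y : T, if x = y then pr x * qr y else 0 := by
      rw [hDdef]
      exact Finset.sum_congr rfl fun x _ => by rw [Finset.sum_ite_eq]; simp
    rw [hWdef, hW'def, hD', ← Finset.sum_add_distrib, ← Finset.sum_add_distrib]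
    have : ∀ x : T, ((∑ y : T, if rlt y x then pr x * qr y else 0)
        + ∑ y : T, if rlt x y then pr x * qr y else 0)
        + ∑ y : T, (if x = y then pr x * qr y else 0)
        = ∑ y : T, pr x * qr y := by
      intro x
      rw [← Finset.sum_add_distrib, ← Finset.sum_add_distrib]
      refine Finset.sum_congr rfl fun y _ => ?_
      rcases (show rlt x y ∨ x = y ∨ rlt y x from
        (lt_trichotomy (g x) (g y)).imp_right (Or.imp_left fun h => hginj h)) with h | h | h
      · rw [if_pos h, if_neg (hasymm y x h), if_neg (Ne.symm (hne y x h))]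
        ring
      · rw [if_pos h, if_neg, if_neg]
        · ring
        · rintro h'; exact hirr x (h ▸ h')
        · rintro h'; exact hirr x (h ▸ h')
      · rw [if_pos h, if_neg (hasymm x y h), if_neg (hne x y h)]
        ring
    rw [Finset.sum_congr rfl fun x _ => this x]
    rw [← Finset.sum_mul_sum]
    rw [hprs, hqrs]; ring
  -- the S bound
  set S : ℝ := ∑ x : T, ∑ y : T, if rlt y x then a x y else 0 with hSdef
  have hWW' : W - W' = S := by
    have hswap : W' = ∑ x : T, ∑ y : T, if rlt y x then pr y * qr x else 0 := by
      rw [hW'def, Finset.sum_comm]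
    rw [hswap, hSdef, ← Finset.sum_sub_distrib]
    refine Finset.sum_congr rfl fun x _ => ?_
    rw [← Finset.sum_sub_distrib]
    refine Finset.sum_congr rfl fun y _ => ?_
    split_ifs <;> simp [hadef]
  have hSmax : S = ∑ x : T, ∑ y : T, max (a x y) 0 := by
    rw [hSdef]
    refine Finset.sum_congr rfl fun x _ => Finset.sum_congr rfl fun y _ => ?_
    rcases (show rlt y x ∨ y = x ∨ rlt x y from
      (lt_trichotomy (g y) (g x)).imp_right (Or.imp_left fun h => hginj h)) with h | h | h
    · rw [if_pos h, max_eq_left (hkey' x y h)]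
    · have : a x y = 0 := by subst h; simp [hadef]
      rw [if_neg, this]; · simp
      · rintro h'; exact hirr x (h ▸ h')
    · have h1 : a x y ≤ 0 := by
        have := hkey' y x h
        simp only [hadef] at this ⊢
        linarith
      rw [if_neg (hasymm y x h), max_eq_right h1]
  set d : T → ℝ := fun x => max (pr x - qr x) 0 with hddef
  set d' : T → ℝ := fun x => max (qr x - pr x) 0 with hd'def
  have hrow : ∀ x : T, ∑ y : T, a x y = pr x - qr x := by
    intro x
    simp only [hadef]
    rw [Finset.sum_sub_distrib, ← Finset.mul_sum, ← Finset.sum_mul, hprs, hqrs]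
    ring
  have hSd : ∑ x : T, d x ≤ S := by
    rw [hSmax]
    refine Finset.sum_le_sum fun x _ => ?_
    have h1 : ∑ y : T, a x y ≤ ∑ y : T, max (a x y) 0 :=
      Finset.sum_le_sum fun y _ => le_max_left _ _
    have h2 : (0 : ℝ) ≤ ∑ y : T, max (a x y) 0 :=
      Finset.sum_nonneg fun y _ => le_max_right _ _
    rw [hrow x] at h1
    exact max_le h1 h2
  have hdd' : ∑ x : T, d x = ∑ x : T, d' x := by
    have h1 : ∑ x : T, (d x - d' x) = 0 := by
      have : ∀ x : T, d x - d' x = pr x - qr x := by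
        intro x
        rcases le_total (pr x) (qr x) with h | h
        · simp only [hddef, hd'def]
          rw [max_eq_right (by linarith), max_eq_left (by linarith)]
          ring
        · simp only [hddef, hd'def]
          rw [max_eq_left (by linarith), max_eq_right (by linarith)]
          ring
      rw [Finset.sum_congr rfl fun x _ => this x, Finset.sum_sub_distrib, hprs, hqrs]
      ring
    rw [Finset.sum_sub_distrib] at h1
    linarith
  set L : ℝ := Finset.univ.sup' Finset.univ_nonempty
      (fun x : T => |(p x).toReal - (q x).toReal|) with hLdef
  have hLd : L ≤ ∑ x : T, d x := by
    rw [hLdef]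
    refine Finset.sup'_le _ _ fun x _ => ?_
    have h1 : pr x - qr x ≤ ∑ x : T, d x := by
      calc pr x - qr x ≤ d x := le_max_left _ _
      _ ≤ ∑ x : T, d x :=
        Finset.single_le_sum (f := d) (fun y _ => le_max_right _ _) (Finset.mem_univ x)
    have h2 : qr x - pr x ≤ ∑ x : T, d x := by
      rw [hdd']
      calc qr x - pr x ≤ d' x := le_max_left _ _
      _ ≤ ∑ x : T, d' x :=
        Finset.single_le_sum (f := d') (fun y _ => le_max_right _ _) (Finset.mem_univ x)
    exact abs_le.mpr ⟨by linarith, h1⟩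
  have hL0 : 0 ≤ L := by
    rw [hLdef]
    refine le_trans (abs_nonneg ((p (Classical.arbitrary T)).toReal
      - (q (Classical.arbitrary T)).toReal)) ?_
    exact Finset.le_sup' (fun x : T => |(p x).toReal - (q x).toReal|)
      (Finset.mem_univ (Classical.arbitrary T))
  have hL1 : L ≤ 1 := by
    rw [hLdef]
    refine Finset.sup'_le _ _ fun x _ => ?_
    have := hpr0 x; have := hqr0 x; have := hpr1 x; have := hqr1 x
    rw [abs_le]; constructor <;> [linarith; linarith]
  have hL2 : L ^ 2 ≤ S := by
    calc L ^ 2 = L * L := sq L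
    _ ≤ 1 * L := by nlinarith
    _ = L := one_mul L
    _ ≤ ∑ x : T, d x := hLd
    _ ≤ S := hSd
  refine ⟨rlt, hsto, ?_⟩
  rw [probR0_toReal rlt hirr p q]
  have epr : ∀ x, (p x).toReal = pr x := fun _ => rfl
  have eqr : ∀ x, (q x).toReal = qr x := fun _ => rfl
  simp only [epr, eqr]
  rw [← hWdef, ← hDdef]
  linarith

end
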